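/- Let λ, μ, ν > 0 with δ := λ − νμ ≠ 0 and η ∈ ℝ. Then V(t) = (η/δ)·(λ − νμ·exp(−λδt)) satisfies the Volterra integral equation V(t) = η + νλμ·∫₀ᵗ exp(−λ²(t−τ))·V(τ)dτ for all t ≥ 0. Moreover, if δ > 0 then lim_{t→∞} V(t) = ηλ/δ. -/

import Mathlib

lemma int_exp_aux (c t : ℝ) (hc : c ≠ 0) :
    ∫ x in (0:ℝ)..t, Real.exp (c*x) = (Real.exp (c*t) - 1)/c := by
  rw [intervalIntegral.integral_comp_mul_left (fun x => Real.exp x) hc]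
  simp [integral_exp, mul_comm, div_eq_inv_mul]

lemma alg_aux (lam μ ν η δ E E2 E3 X : ℝ) (hlam : lam ≠ 0) (hνμ : ν*μ ≠ 0) (hδ : δ ≠ 0)
    (hδdef : δ = lam - ν*μ) (f1 : E*E2 = 1) (f2 : E*E3 = X) :
    η/δ*(lam - ν*μ*X) =
      η + ν*lam*μ*(η/δ*lam*E*((E2-1)/lam^2) - η/δ*(ν*μ)*E*((E3-1)/(lam*(ν*μ)))) := by
  have hν : ν ≠ 0 := left_ne_zero_of_mul hνμ
  have hμ : μ ≠ 0 := right_ne_zero_of_mul hνμ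
  have a : ν*lam*μ*(η/δ*lam*E*((E2-1)/lam^2)) = ν*μ*η/δ*(E*E2 - E) := by
    field_simp
  have b : ν*lam*μ*(η/δ*(ν*μ)*E*((E3-1)/(lam*(ν*μ)))) = ν*μ*η/δ*(E*E3 - E) := by
    field_simp
  rw [mul_sub (ν*lam*μ), a, b, f1, f2]
  have c : η/δ*δ = η := by field_simp
  linear_combination (-η/δ)*hδdef + c

theorem stmt14 (lam μ ν η : ℝ) (hlam : 0 < lam) (hμ : 0 < μ) (hν : 0 < ν)
    (δ : ℝ) (hδdef : δ = lam - ν * μ) (hδ : δ ≠ 0)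
    (V : ℝ → ℝ)
    (hV : ∀ t : ℝ, V t = η / δ * (lam - ν * μ * Real.exp (-(lam * δ) * t))) :
    (∀ t : ℝ, 0 ≤ t →
        V t = η + ν * lam * μ * ∫ τ in (0:ℝ)..t, Real.exp (-lam ^ 2 * (t - τ)) * V τ) ∧
    (0 < δ → Filter.Tendsto V Filter.atTop (nhds (η * lam / δ))) := by
  have hlam' : lam ≠ 0 := hlam.ne'
  have hνμ : ν * μ ≠ 0 := by positivity
  constructor
  · intro t ht
    have hcong : ∀ τ ∈ Set.uIcc (0:ℝ) t,
        Real.exp (-lam ^ 2 * (t - τ)) * V τ =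
        (η / δ * lam * Real.exp (-lam^2 * t)) * Real.exp (lam^2 * τ)
          - (η / δ * (ν * μ) * Real.exp (-lam^2 * t)) * Real.exp ((lam * (ν * μ)) * τ) := by
      intro τ _
      rw [hV τ]
      rw [show -lam ^ 2 * (t - τ) = -lam^2 * t + lam^2 * τ by ring,
        show (lam * (ν * μ)) * τ = lam^2 * τ + (-(lam * δ) * τ) by rw [hδdef]; ring,
        Real.exp_add, Real.exp_add]
      ring
    rw [intervalIntegral.integral_congr hcong]
    rw [intervalIntegral.integral_sub
      (by exact (Continuous.intervalIntegrable (by continuity) _ _))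
      (by exact (Continuous.intervalIntegrable (by continuity) _ _)),
      intervalIntegral.integral_const_mul, intervalIntegral.integral_const_mul,
      int_exp_aux _ _ (by positivity : (lam:ℝ)^2 ≠ 0),
      int_exp_aux _ _ (mul_ne_zero hlam' hνμ)]
    rw [hV t]
    have e1 : Real.exp (-lam^2 * t) * Real.exp (lam^2 * t) = 1 := by
      rw [← Real.exp_add]; simp
    have e2 : Real.exp (-lam^2 * t) * Real.exp (lam * (ν * μ) * t) =
        Real.exp (-(lam*δ) * t) := by
      rw [← Real.exp_add]; congr 1; rw [hδdef]; ring
    exact alg_aux lam μ ν η δ _ _ _ _ hlam' hνμ hδ hδdef e1 e2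
  · intro hδpos
    have h1 : Filter.Tendsto (fun t => Real.exp (-(lam * δ) * t)) Filter.atTop (nhds 0) := by
      apply Real.tendsto_exp_atBot.comp
      exact Filter.Tendsto.const_mul_atTop_of_neg (by nlinarith) Filter.tendsto_id
    have h2 : Filter.Tendsto (fun t => η / δ * (lam - ν * μ * Real.exp (-(lam * δ) * t)))
        Filter.atTop (nhds (η / δ * (lam - ν * μ * 0))) :=
      ((h1.const_mul (ν*μ)).const_sub lam).const_mul (η/δ)
    have h3 : Filter.Tendsto V Filter.atTop (nhds (η / δ * (lam - ν * μ * 0))) :=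
      h2.congr (fun t => (hV t).symm)
    have : η / δ * (lam - ν * μ * 0) = η * lam / δ := by ring
    rwa [this] at h3
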